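/- Under the diminishing learning-rate assumptions, lim_{K→∞} ((CX̄^K)_max − (1/A_K) ∑_{k=0}^K α_k X^k·CX^k) = 0. -/

import Mathlib

open Filter Topology Finset Matrix

noncomputable section

/-- Membership in the probability simplex Δ ⊆ ℝ^n. -/
def isSimplex {n : ℕ} (X : Fin n → ℝ) : Prop :=
  (∀ i, 0 ≤ X i) ∧ ∑ i, X i = 1

/-- Interior point of the probability simplex. -/
def isInteriorPt {n : ℕ} (X : Fin n → ℝ) : Prop :=
  (∀ i, 0 < X i) ∧ ∑ i, X i = 1

/-- The Hedge map T_α. -/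
noncomputable def hedge {n : ℕ} (C : Matrix (Fin n) (Fin n) ℝ) (a : ℝ) (X : Fin n → ℝ) :
    Fin n → ℝ :=
  fun i => X i * Real.exp (a * C.mulVec X i) / ∑ j, X j * Real.exp (a * C.mulVec X j)

/-- Hedge iterates: X^0 = X0, X^{k+1} = T_{α_k}(X^k). -/
noncomputable def hiter {n : ℕ} (C : Matrix (Fin n) (Fin n) ℝ) (a : ℕ → ℝ) (X0 : Fin n → ℝ) :
    ℕ → Fin n → ℝ
  | 0 => X0
  | k + 1 => hedge C (a k) (hiter C a X0 k)

/-- A_K = ∑_{k=0}^K α_k. -/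
noncomputable def pSum (a : ℕ → ℝ) (K : ℕ) : ℝ := ∑ k ∈ Finset.range (K + 1), a k

/-- Weighted empirical average X̄^K = (1/A_K) ∑_{k=0}^K α_k X^k. -/
noncomputable def wavg {n : ℕ} (C : Matrix (Fin n) (Fin n) ℝ) (a : ℕ → ℝ) (X0 : Fin n → ℝ)
    (K : ℕ) : Fin n → ℝ :=
  (pSum a K)⁻¹ • ∑ k ∈ Finset.range (K + 1), a k • hiter C a X0 k

/-- Relative entropy RE(Y, X) = ∑_{i : Y(i) > 0} Y(i) ln(Y(i)/X(i)). -/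
noncomputable def RE {n : ℕ} (Y X : Fin n → ℝ) : ℝ :=
  ∑ i ∈ Finset.univ.filter (fun i => 0 < Y i), Y i * Real.log (Y i / X i)

/-- (CX)_max = max_i (CX)_i. -/
noncomputable def cmax {n : ℕ} (C : Matrix (Fin n) (Fin n) ℝ) (X : Fin n → ℝ) : ℝ :=
  ⨆ i, C.mulVec X i

/-- X̄ is a limit point of the sequence of weighted empirical averages. -/
def isLimitPoint {n : ℕ} (C : Matrix (Fin n) (Fin n) ℝ) (a : ℕ → ℝ) (X0 : Fin n → ℝ)
    (Xb : Fin n → ℝ) : Prop :=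
  ∃ φ : ℕ → ℕ, StrictMono φ ∧ Tendsto (fun j => wavg C a X0 (φ j)) atTop (𝓝 Xb)
namespace Stmt17Aux

variable {n : ℕ} (C : Matrix (Fin n) (Fin n) ℝ) (a : ℕ → ℝ) (X0 : Fin n → ℝ)

/-- Z_k, the normalizing constant at step k. -/
noncomputable def Zk (k : ℕ) : ℝ :=
  ∑ j, hiter C a X0 k j * Real.exp (a k * C.mulVec (hiter C a X0 k) j)

lemma hiter_succ (k : ℕ) (i : Fin n) :
    hiter C a X0 (k + 1) i
      = hiter C a X0 k i * Real.exp (a k * C.mulVec (hiter C a X0 k) i) / Zk C a X0 k := rfl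

variable [Nonempty (Fin n)]

lemma hiter_interior (hX0 : isInteriorPt X0) (k : ℕ) :
    isInteriorPt (hiter C a X0 k) := by
  induction k with
  | zero => exact hX0
  | succ k ih =>
    have hZ : 0 < Zk C a X0 k :=
      Finset.sum_pos (fun j _ => mul_pos (ih.1 j) (Real.exp_pos _)) Finset.univ_nonempty
    constructor
    · intro i
      rw [hiter_succ]
      exact div_pos (mul_pos (ih.1 i) (Real.exp_pos _)) hZ
    · have : ∑ i, hiter C a X0 (k + 1) i
          = (∑ i, hiter C a X0 k i * Real.exp (a k * C.mulVec (hiter C a X0 k) i)) / Zk C a X0 k := by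
        simp only [hiter_succ, Finset.sum_div]
      rw [this]
      exact div_self hZ.ne'

lemma Zk_pos (hX0 : isInteriorPt X0) (k : ℕ) : 0 < Zk C a X0 k :=
  Finset.sum_pos (fun j _ => mul_pos ((hiter_interior C a X0 hX0 k).1 j) (Real.exp_pos _))
    Finset.univ_nonempty

lemma log_telescope (hX0 : isInteriorPt X0) (K : ℕ) (i : Fin n) :
    Real.log (hiter C a X0 (K + 1) i)
      = Real.log (X0 i) + ∑ k ∈ Finset.range (K + 1),
          (a k * C.mulVec (hiter C a X0 k) i - Real.log (Zk C a X0 k)) := by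
  have step : ∀ k, Real.log (hiter C a X0 (k + 1) i)
      = Real.log (hiter C a X0 k i)
        + (a k * C.mulVec (hiter C a X0 k) i - Real.log (Zk C a X0 k)) := by
    intro k
    rw [hiter_succ,
      Real.log_div (mul_pos ((hiter_interior C a X0 hX0 k).1 i) (Real.exp_pos _)).ne'
        (Zk_pos C a X0 hX0 k).ne',
      Real.log_mul ((hiter_interior C a X0 hX0 k).1 i).ne' (Real.exp_pos _).ne', Real.log_exp]
    ring
  induction K with
  | zero => rw [step 0, Finset.sum_range_one]; rfl
  | succ K ih => rw [step (K + 1), ih, Finset.sum_range_succ _ (K + 1)]; ring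


/-- Chord bound for exp on `[0, b]`. -/
lemma exp_chord {b t : ℝ} (hb : 0 < b) (ht0 : 0 ≤ t) (htb : t ≤ b) :
    Real.exp t ≤ 1 + (Real.exp b - 1) * t / b := by
  have hs0 : 0 ≤ t / b := div_nonneg ht0 hb.le
  have hs1 : t / b ≤ 1 := (div_le_one hb).2 htb
  have h := convexOn_exp.2 (Set.mem_univ (0 : ℝ)) (Set.mem_univ b)
    (sub_nonneg.2 hs1) hs0 (by ring)
  simp only [smul_eq_mul, mul_zero, zero_add, Real.exp_zero, mul_one] at h
  have ht : t / b * b = t := div_mul_cancel₀ t hb.ne'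
  rw [ht] at h
  calc Real.exp t ≤ 1 - t / b + t / b * Real.exp b := h
    _ = 1 + (Real.exp b - 1) * t / b := by ring

/-- Jensen: `a_k ⟨X,u⟩ ≤ log Z_k`. -/
lemma jensen_step (hX0 : isInteriorPt X0) (k : ℕ) :
    a k * (hiter C a X0 k ⬝ᵥ C.mulVec (hiter C a X0 k)) ≤ Real.log (Zk C a X0 k) := by
  set X := hiter C a X0 k with hXdef
  set u := C.mulVec (hiter C a X0 k) with hudef
  have hint := hiter_interior C a X0 hX0 k
  have hj : Real.exp (∑ i, X i • (a k * u i)) ≤ ∑ i, X i • Real.exp (a k * u i) :=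
    convexOn_exp.map_sum_le (fun i _ => (hint.1 i).le) hint.2 (fun i _ => Set.mem_univ _)
  simp only [smul_eq_mul] at hj
  have h1 : a k * (X ⬝ᵥ u) = ∑ i, X i * (a k * u i) := by
    simp only [dotProduct, Finset.mul_sum]; exact Finset.sum_congr rfl fun i _ => by ring
  have h2 : (∑ i, X i * Real.exp (a k * u i)) = Zk C a X0 k := rfl
  rw [h1, ← Real.log_exp (∑ i, X i * (a k * u i))]
  exact Real.log_le_log (Real.exp_pos _) (h2 ▸ hj)


lemma u_nonneg (hC : ∀ i j, 0 ≤ C i j) (hX0 : isInteriorPt X0) (k : ℕ) (i : Fin n) :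
    0 ≤ C.mulVec (hiter C a X0 k) i := by
  simp only [Matrix.mulVec, dotProduct]
  exact Finset.sum_nonneg fun j _ =>
    mul_nonneg (hC i j) ((hiter_interior C a X0 hX0 k).1 j).le

lemma u_le (hC : ∀ i j, 0 ≤ C i j) (hX0 : isInteriorPt X0) (k : ℕ) (i : Fin n) :
    C.mulVec (hiter C a X0 k) i ≤ 1 + ∑ i, ∑ j, C i j := by
  have hint := hiter_interior C a X0 hX0 k
  have hX1 : ∀ j, hiter C a X0 k j ≤ 1 := by
    intro j
    calc hiter C a X0 k j ≤ ∑ i, hiter C a X0 k i :=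
          Finset.single_le_sum (fun i _ => (hint.1 i).le) (Finset.mem_univ j)
      _ = 1 := hint.2
  have h1 : C.mulVec (hiter C a X0 k) i ≤ ∑ j, C i j := by
    simp only [Matrix.mulVec, dotProduct]
    refine Finset.sum_le_sum fun j _ => ?_
    calc C i j * hiter C a X0 k j ≤ C i j * 1 := mul_le_mul_of_nonneg_left (hX1 j) (hC i j)
      _ = C i j := mul_one _
  have h2 : (∑ j, C i j) ≤ ∑ i, ∑ j, C i j :=
    Finset.single_le_sum (fun i _ => Finset.sum_nonneg fun j _ => hC i j) (Finset.mem_univ i)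
  linarith

lemma dot_nonneg (hC : ∀ i j, 0 ≤ C i j) (hX0 : isInteriorPt X0) (k : ℕ) :
    0 ≤ hiter C a X0 k ⬝ᵥ C.mulVec (hiter C a X0 k) :=
  Finset.sum_nonneg fun i _ =>
    mul_nonneg ((hiter_interior C a X0 hX0 k).1 i).le (u_nonneg C a X0 hC hX0 k i)

lemma dot_le (hC : ∀ i j, 0 ≤ C i j) (hX0 : isInteriorPt X0) (k : ℕ) :
    hiter C a X0 k ⬝ᵥ C.mulVec (hiter C a X0 k) ≤ 1 + ∑ i, ∑ j, C i j := by
  have hint := hiter_interior C a X0 hX0 k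
  calc hiter C a X0 k ⬝ᵥ C.mulVec (hiter C a X0 k)
      ≤ ∑ i, hiter C a X0 k i * (1 + ∑ i, ∑ j, C i j) :=
        Finset.sum_le_sum fun i _ =>
          mul_le_mul_of_nonneg_left (u_le C a X0 hC hX0 k i) (hint.1 i).le
    _ = 1 + ∑ i, ∑ j, C i j := by rw [← Finset.sum_mul, hint.2, one_mul]

/-- Second-order upper bound on `log Z_k`. -/
lemma logZ_le (hC : ∀ i j, 0 ≤ C i j) (hX0 : isInteriorPt X0) (hapos : ∀ k, 0 < a k) (k : ℕ) :
    Real.log (Zk C a X0 k) ≤ a k * (hiter C a X0 k ⬝ᵥ C.mulVec (hiter C a X0 k))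
      + (Real.exp (a k * (1 + ∑ i, ∑ j, C i j)) - 1 - a k * (1 + ∑ i, ∑ j, C i j)) := by
  have hM1 : (1 : ℝ) ≤ 1 + ∑ i, ∑ j, C i j := by
    have : (0 : ℝ) ≤ ∑ i, ∑ j, C i j :=
      Finset.sum_nonneg fun i _ => Finset.sum_nonneg fun j _ => hC i j
    linarith
  set M : ℝ := 1 + ∑ i, ∑ j, C i j with hMdef
  have hM0 : (0 : ℝ) < M := lt_of_lt_of_le one_pos hM1
  have hint := hiter_interior C a X0 hX0 k
  have hb : 0 < a k * M := mul_pos (hapos k) hM0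
  have hS0 := dot_nonneg C a X0 hC hX0 k
  have hSM := dot_le C a X0 hC hX0 k
  rw [← hMdef] at hSM
  have hZle : Zk C a X0 k
      ≤ 1 + (Real.exp (a k * M) - 1) / M * (hiter C a X0 k ⬝ᵥ C.mulVec (hiter C a X0 k)) := by
    have h : ∀ i, hiter C a X0 k i * Real.exp (a k * C.mulVec (hiter C a X0 k) i)
        ≤ hiter C a X0 k i
            * (1 + (Real.exp (a k * M) - 1) * C.mulVec (hiter C a X0 k) i / M) := by
      intro i
      refine mul_le_mul_of_nonneg_left ?_ (hint.1 i).le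
      have hchord := exp_chord hb (mul_nonneg (hapos k).le (u_nonneg C a X0 hC hX0 k i))
        (mul_le_mul_of_nonneg_left (u_le C a X0 hC hX0 k i) (hapos k).le)
      have heq : 1 + (Real.exp (a k * M) - 1) * (a k * C.mulVec (hiter C a X0 k) i) / (a k * M)
          = 1 + (Real.exp (a k * M) - 1) * C.mulVec (hiter C a X0 k) i / M := by
        rw [mul_left_comm (Real.exp (a k * M) - 1), mul_div_mul_left _ _ (hapos k).ne']
      rw [heq] at hchord
      exact hchord
    calc Zk C a X0 k
        ≤ ∑ i, hiter C a X0 k i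
            * (1 + (Real.exp (a k * M) - 1) * C.mulVec (hiter C a X0 k) i / M) :=
          Finset.sum_le_sum fun i _ => h i
      _ = (∑ i, hiter C a X0 k i) + (Real.exp (a k * M) - 1) / M
            * ∑ i, hiter C a X0 k i * C.mulVec (hiter C a X0 k) i := by
          rw [Finset.mul_sum, ← Finset.sum_add_distrib]
          exact Finset.sum_congr rfl fun i _ => by ring
      _ = 1 + (Real.exp (a k * M) - 1) / M
            * (hiter C a X0 k ⬝ᵥ C.mulVec (hiter C a X0 k)) := by rw [hint.2]; rfl
  have hlog : Real.log (Zk C a X0 k)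
      ≤ (Real.exp (a k * M) - 1) / M * (hiter C a X0 k ⬝ᵥ C.mulVec (hiter C a X0 k)) := by
    have := Real.log_le_sub_one_of_pos (Zk_pos C a X0 hX0 k)
    linarith
  have hkey : (Real.exp (a k * M) - 1) / M * (hiter C a X0 k ⬝ᵥ C.mulVec (hiter C a X0 k))
      ≤ a k * (hiter C a X0 k ⬝ᵥ C.mulVec (hiter C a X0 k))
        + (Real.exp (a k * M) - 1 - a k * M) := by
    rw [div_mul_eq_mul_div, div_le_iff₀ hM0]
    have hE : a k * M ≤ Real.exp (a k * M) - 1 := by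
      have := Real.add_one_le_exp (a k * M); linarith
    nlinarith [mul_nonneg (sub_nonneg.2 hE) (sub_nonneg.2 hSM)]
  exact hlog.trans hkey


lemma mulVec_wavg (K : ℕ) (i : Fin n) :
    C.mulVec (wavg C a X0 K) i
      = (pSum a K)⁻¹ * ∑ k ∈ Finset.range (K + 1), a k * C.mulVec (hiter C a X0 k) i := by
  simp only [wavg, Matrix.mulVec, dotProduct, Pi.smul_apply, Finset.sum_apply, smul_eq_mul,
    Finset.mul_sum, Finset.sum_mul]
  rw [Finset.sum_comm]
  exact Finset.sum_congr rfl fun k _ => Finset.sum_congr rfl fun j _ => by ring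

lemma exists_coord_ge (hX0 : isInteriorPt X0) (K : ℕ) :
    ∃ i, X0 i ≤ hiter C a X0 (K + 1) i := by
  by_contra h
  push_neg at h
  have h2 := Finset.sum_lt_sum_of_nonempty (Finset.univ_nonempty (α := Fin n))
    fun i _ => h i
  rw [(hiter_interior C a X0 hX0 (K + 1)).2, hX0.2] at h2
  exact lt_irrefl 1 h2

end Stmt17Aux

/-- (CX̄^K)_max − (1/A_K) ∑ α_k X^k·CX^k → 0. -/
theorem stmt17 {n : ℕ} (hn : 0 < n) (C : Matrix (Fin n) (Fin n) ℝ)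
    (hC : ∀ i j, 0 ≤ C i j)
    (a : ℕ → ℝ) (hapos : ∀ k, 0 < a k)
    (ha0 : Tendsto a atTop (𝓝 0))
    (hadiv : Tendsto (pSum a) atTop atTop)
    (hasum : Summable fun k => a k * (Real.exp (a k) - 1))
    (X0 : Fin n → ℝ) (hX0 : isInteriorPt X0) :
    Tendsto (fun K => cmax C (wavg C a X0 K) -
        (pSum a K)⁻¹ * ∑ k ∈ Finset.range (K + 1),
          a k * (hiter C a X0 k ⬝ᵥ C.mulVec (hiter C a X0 k)))
      atTop (𝓝 0) := by
  haveI : Nonempty (Fin n) := Fin.pos_iff_nonempty.mp hn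
  classical
  open Stmt17Aux in
  have hMnn : (0:ℝ) ≤ ∑ i, ∑ j, C i j :=
    Finset.sum_nonneg fun i _ => Finset.sum_nonneg fun j _ => hC i j
  set M : ℝ := 1 + ∑ i, ∑ j, C i j with hMdef
  have hM1 : (1:ℝ) ≤ M := by rw [hMdef]; linarith
  have hM0 : (0:ℝ) < M := lt_of_lt_of_le one_pos hM1
  set c : ℕ → ℝ := fun k => Real.exp (a k * M) - 1 - a k * M with hcdef
  have hc0 : ∀ k, 0 ≤ c k := by
    intro k
    have := Real.add_one_le_exp (a k * M)
    simp only [hcdef]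
    linarith
  have hcsum : Summable c := by
    obtain ⟨N, hN⟩ : ∃ N, ∀ k ≥ N, a k ≤ 1 / M :=
      eventually_atTop.1 (ha0.eventually (eventually_le_nhds (by positivity)))
    rw [← summable_nat_add_iff N]
    refine Summable.of_nonneg_of_le (fun k => hc0 _) (fun k => ?_)
      (((summable_nat_add_iff N).2 hasum).mul_left (M ^ 2))
    have ha1 : a (k + N) * M ≤ 1 := by
      have h := hN (k + N) (Nat.le_add_left N k)
      rw [le_div_iff₀ hM0] at h
      exact h
    have hx0 : (0:ℝ) ≤ a (k + N) * M := (mul_pos (hapos _) hM0).le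
    have hb := Real.exp_bound (x := a (k + N) * M) (abs_le.2 ⟨by linarith, ha1⟩)
      (n := 2) (by norm_num)
    rw [abs_of_nonneg hx0] at hb
    have hsum2 : ∑ m ∈ Finset.range 2, (a (k + N) * M) ^ m / (m.factorial : ℝ)
        = 1 + a (k + N) * M := by
      simp [Finset.sum_range_succ]
    rw [hsum2] at hb
    have hb2 := (abs_le.1 hb).2
    have h34 : ((Nat.succ 2 : ℕ) : ℝ) / (((2:ℕ).factorial : ℝ) * (2:ℕ)) = 3 / 4 := by
      norm_num [Nat.factorial]
    rw [h34] at hb2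
    have hexp : a (k + N) ≤ Real.exp (a (k + N)) - 1 := by
      have := Real.add_one_le_exp (a (k + N)); linarith
    have hap := (hapos (k + N)).le
    simp only [hcdef]
    clear_value M
    nlinarith [mul_nonneg (mul_nonneg (sub_nonneg.2 hexp) hap) (sq_nonneg M),
      sq_nonneg (a (k + N) * M), mul_pos (hapos (k + N)) hM0]
  set E : ℝ := ∑' k, c k with hEdef
  have hEb : ∀ K : ℕ, ∑ k ∈ Finset.range (K + 1), c k ≤ E := fun K =>
    Summable.sum_le_tsum _ (fun k _ => hc0 k) hcsum
  have hX0le1 : ∀ i, X0 i ≤ 1 := by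
    intro i
    calc X0 i ≤ ∑ j, X0 j := Finset.single_le_sum (fun j _ => (hX0.1 j).le) (Finset.mem_univ i)
      _ = 1 := hX0.2
  set R : ℝ := ∑ i, (-Real.log (X0 i)) with hRdef
  have hRi : ∀ i, -Real.log (X0 i) ≤ R := fun i =>
    Finset.single_le_sum
      (fun j _ => neg_nonneg.2 (Real.log_nonpos (hX0.1 j).le (hX0le1 j))) (Finset.mem_univ i)
  -- per-K quantities
  have hA : ∀ K : ℕ, 0 < pSum a K := fun K =>
    Finset.sum_pos (fun k _ => hapos k) Finset.nonempty_range_add_one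
  have h1 : ∀ K : ℕ, ∑ k ∈ Finset.range (K + 1), a k * (hiter C a X0 k ⬝ᵥ C.mulVec (hiter C a X0 k))
      ≤ ∑ k ∈ Finset.range (K + 1), Real.log (Zk C a X0 k) := fun K =>
    Finset.sum_le_sum fun k _ => jensen_step C a X0 hX0 k
  have h2 : ∀ K : ℕ, ∑ k ∈ Finset.range (K + 1), Real.log (Zk C a X0 k)
      ≤ (∑ k ∈ Finset.range (K + 1),
          a k * (hiter C a X0 k ⬝ᵥ C.mulVec (hiter C a X0 k))) + E := by
    intro K
    calc ∑ k ∈ Finset.range (K + 1), Real.log (Zk C a X0 k)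
        ≤ ∑ k ∈ Finset.range (K + 1),
            (a k * (hiter C a X0 k ⬝ᵥ C.mulVec (hiter C a X0 k)) + c k) :=
          Finset.sum_le_sum fun k _ => logZ_le C a X0 hC hX0 hapos k
      _ = (∑ k ∈ Finset.range (K + 1),
            a k * (hiter C a X0 k ⬝ᵥ C.mulVec (hiter C a X0 k)))
            + ∑ k ∈ Finset.range (K + 1), c k := Finset.sum_add_distrib
      _ ≤ _ := by have := hEb K; linarith
  -- telescope consequences
  have h3 : ∀ (K : ℕ) (i : Fin n),
      ∑ k ∈ Finset.range (K + 1), a k * C.mulVec (hiter C a X0 k) i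
        ≤ (∑ k ∈ Finset.range (K + 1), Real.log (Zk C a X0 k)) + R := by
    intro K i
    have htel := log_telescope C a X0 hX0 K i
    have hle1 : hiter C a X0 (K + 1) i ≤ 1 := by
      have hint := hiter_interior C a X0 hX0 (K + 1)
      calc hiter C a X0 (K + 1) i ≤ ∑ j, hiter C a X0 (K + 1) j :=
            Finset.single_le_sum (fun j _ => (hint.1 j).le) (Finset.mem_univ i)
        _ = 1 := hint.2
    have hlog0 : Real.log (hiter C a X0 (K + 1) i) ≤ 0 :=
      Real.log_nonpos ((hiter_interior C a X0 hX0 (K + 1)).1 i).le hle1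
    have hsplit : ∑ k ∈ Finset.range (K + 1),
        (a k * C.mulVec (hiter C a X0 k) i - Real.log (Zk C a X0 k))
        = (∑ k ∈ Finset.range (K + 1), a k * C.mulVec (hiter C a X0 k) i)
          - ∑ k ∈ Finset.range (K + 1), Real.log (Zk C a X0 k) := Finset.sum_sub_distrib _ _
    have := hRi i
    rw [htel, hsplit] at hlog0
    linarith
  have h4 : ∀ K : ℕ, ∑ k ∈ Finset.range (K + 1), Real.log (Zk C a X0 k)
      ≤ pSum a K * cmax C (wavg C a X0 K) := by
    intro K
    obtain ⟨i, hi⟩ := exists_coord_ge C a X0 hX0 K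
    have htel := log_telescope C a X0 hX0 K i
    have hmono : Real.log (X0 i) ≤ Real.log (hiter C a X0 (K + 1) i) :=
      Real.log_le_log (hX0.1 i) hi
    have hsplit : ∑ k ∈ Finset.range (K + 1),
        (a k * C.mulVec (hiter C a X0 k) i - Real.log (Zk C a X0 k))
        = (∑ k ∈ Finset.range (K + 1), a k * C.mulVec (hiter C a X0 k) i)
          - ∑ k ∈ Finset.range (K + 1), Real.log (Zk C a X0 k) := Finset.sum_sub_distrib _ _
    rw [hsplit] at htel
    have hLle : ∑ k ∈ Finset.range (K + 1), Real.log (Zk C a X0 k)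
        ≤ ∑ k ∈ Finset.range (K + 1), a k * C.mulVec (hiter C a X0 k) i := by linarith
    have hid : ∑ k ∈ Finset.range (K + 1), a k * C.mulVec (hiter C a X0 k) i
        = pSum a K * C.mulVec (wavg C a X0 K) i := by
      rw [mulVec_wavg, ← mul_assoc, mul_inv_cancel₀ (hA K).ne', one_mul]
    have hsup : C.mulVec (wavg C a X0 K) i ≤ cmax C (wavg C a X0 K) :=
      le_ciSup (Set.Finite.bddAbove (Set.finite_range _)) i
    calc ∑ k ∈ Finset.range (K + 1), Real.log (Zk C a X0 k)
        ≤ pSum a K * C.mulVec (wavg C a X0 K) i := hid ▸ hLle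
      _ ≤ pSum a K * cmax C (wavg C a X0 K) :=
          mul_le_mul_of_nonneg_left hsup (hA K).le
  -- lower bound: 0 ≤ f K
  have hlow : ∀ K : ℕ, 0 ≤ cmax C (wavg C a X0 K) -
      (pSum a K)⁻¹ * ∑ k ∈ Finset.range (K + 1),
        a k * (hiter C a X0 k ⬝ᵥ C.mulVec (hiter C a X0 k)) := by
    intro K
    have hchain := (h1 K).trans (h4 K)
    have h5 : (pSum a K)⁻¹ * ∑ k ∈ Finset.range (K + 1),
        a k * (hiter C a X0 k ⬝ᵥ C.mulVec (hiter C a X0 k)) ≤ cmax C (wavg C a X0 K) := by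
      rw [← div_eq_inv_mul]
      exact (div_le_iff₀ (hA K)).2 (by linarith)
    linarith
  -- upper bound
  have hup : ∀ K : ℕ, cmax C (wavg C a X0 K) -
      (pSum a K)⁻¹ * (∑ k ∈ Finset.range (K + 1),
        a k * (hiter C a X0 k ⬝ᵥ C.mulVec (hiter C a X0 k)))
      ≤ (pSum a K)⁻¹ * (E + R) := by
    intro K
    have hsup : cmax C (wavg C a X0 K)
        ≤ (pSum a K)⁻¹ * ((∑ k ∈ Finset.range (K + 1),
            a k * (hiter C a X0 k ⬝ᵥ C.mulVec (hiter C a X0 k))) + (E + R)) := by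
      refine ciSup_le fun i => ?_
      rw [mulVec_wavg]
      refine mul_le_mul_of_nonneg_left ?_ (inv_nonneg.2 (hA K).le)
      have := (h3 K i).trans (by linarith [h2 K] :
        (∑ k ∈ Finset.range (K + 1), Real.log (Zk C a X0 k)) + R
          ≤ (∑ k ∈ Finset.range (K + 1),
              a k * (hiter C a X0 k ⬝ᵥ C.mulVec (hiter C a X0 k))) + (E + R))
      exact this
    have hdistr : (pSum a K)⁻¹ * ((∑ k ∈ Finset.range (K + 1),
            a k * (hiter C a X0 k ⬝ᵥ C.mulVec (hiter C a X0 k))) + (E + R))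
        = (pSum a K)⁻¹ * (∑ k ∈ Finset.range (K + 1),
            a k * (hiter C a X0 k ⬝ᵥ C.mulVec (hiter C a X0 k)))
          + (pSum a K)⁻¹ * (E + R) := mul_add _ _ _
    linarith [hsup, hdistr.le]
  -- squeeze
  have hg : Tendsto (fun K => (pSum a K)⁻¹ * (E + R)) atTop (𝓝 0) := by
    have := hadiv.inv_tendsto_atTop.mul_const (E + R)
    simpa using this
  exact squeeze_zero hlow hup hg
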